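/- Let X = {x_1,…,x_n}, Y = {y_1,…,y_n}, Z = {z_1,…,z_n} be three collections of positive integers and define 3n jobs with processing times p_i = x_i, p_{n+i} = y_i + Σ_{x∈X} x, p_{2n+i} = z_i + Σ_{y∈Y} y + Σ_{x∈X} x for i = 1,…,n. Then p_i < p_{n+j} < p_{2n+k} for all i, j, k ∈ {1,…,n}, and in every schedule of these 3n jobs on n identical machines (all of speed 1) that minimizes Σ_j C_j, each machine processes exactly three jobs: one job from {J_1,…,J_n} in first position, one job from {J_{n+1},…,J_{2n}} in second position, and one job from {J_{2n+1},…,J_{3n}} in third position. -/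

import Mathlib

/-- A schedule of a finite set of jobs `J` on `m` uniform machines: each job gets a
machine and a (1-based) position, positions on each machine are pairwise distinct and
the occupied positions on each machine are exactly `1, …, η_i`. -/
structure Schedule (J : Type) (m : ℕ) where
  mach : J → Fin m
  pos : J → ℕ
  pos_pos : ∀ j, 1 ≤ pos j
  inj : ∀ j j', mach j = mach j' → pos j = pos j' → j = j'
  contiguous : ∀ j, 2 ≤ pos j → ∃ j', mach j' = mach j ∧ pos j' = pos j - 1

namespace Schedule

variable {J : Type} {m : ℕ} [Fintype J]

/-- Number `η_i` of jobs scheduled on machine `i`. -/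
def load (σ : Schedule J m) (i : Fin m) : ℕ :=
  (Finset.univ.filter fun j => σ.mach j = i).card

/-- Completion time of job `j`: jobs on a machine of speed `V i` are processed
consecutively from time 0 without idle time. -/
noncomputable def compl (σ : Schedule J m) (p : J → ℝ) (V : Fin m → ℝ) (j : J) : ℝ :=
  (∑ j' ∈ Finset.univ.filter
      (fun j' => σ.mach j' = σ.mach j ∧ σ.pos j' ≤ σ.pos j), p j') / V (σ.mach j)

/-- Total completion time `Σ_j C_j` of a schedule. -/
noncomputable def totalC (σ : Schedule J m) (p : J → ℝ) (V : Fin m → ℝ) : ℝ :=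
  ∑ j, σ.compl p V j

/-- Positional weight of job `j`: `(η_i + 1 - k)/V_i` where `k` is the position of `j`
on its machine `M_i`, which holds `η_i` jobs. -/
noncomputable def pw (σ : Schedule J m) (V : Fin m → ℝ) (j : J) : ℝ :=
  ((σ.load (σ.mach j) : ℝ) + 1 - (σ.pos j : ℝ)) / V (σ.mach j)

end Schedule

/-- Processing times of the Numerical-3-Dimensional-Matching reduction: job `(0,i)` has
processing time `x_i`, job `(1,i)` has `y_i + Σ_x x`, and job `(2,i)` has
`z_i + Σ_y y + Σ_x x`. -/
noncomputable def procNDM (n : ℕ) (x y z : Fin n → ℕ) : Fin 3 × Fin n → ℝ := fun j =>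
  if j.1 = 0 then ((x j.2 : ℕ) : ℝ)
  else if j.1 = 1 then ((y j.2 + ∑ i, x i : ℕ) : ℝ)
  else ((z j.2 + ∑ i, y i + ∑ i, x i : ℕ) : ℝ)

namespace Schedule

section Aux

set_option linter.unusedSectionVars false

variable {J : Type} {m : ℕ} [Fintype J]

/-- Natural-number positional weight of a job. -/
def wn (σ : Schedule J m) (j : J) : ℕ := σ.load (σ.mach j) + 1 - σ.pos j

lemma image_pos_eq (σ : Schedule J m) (i : Fin m) :
    (Finset.univ.filter fun j => σ.mach j = i).image σ.pos
      = Finset.Icc 1 (σ.load i) := by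
  classical
  set s := Finset.univ.filter fun j => σ.mach j = i with hs
  have hinj : Set.InjOn σ.pos s := by
    intro a ha b hb hab
    simp only [hs, Finset.coe_filter, Set.mem_setOf_eq, Finset.mem_coe,
      Finset.mem_filter, Finset.mem_univ, true_and] at ha hb
    exact σ.inj a b (ha.trans hb.symm) hab
  have hcard : (s.image σ.pos).card = σ.load i := by
    rw [Finset.card_image_of_injOn hinj]; rfl
  have hdown : ∀ k, k ∈ s.image σ.pos → ∀ l, 1 ≤ l → l ≤ k → l ∈ s.image σ.pos := by
    intro k
    induction k with
    | zero => intro _ l h1 h2; omega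
    | succ k ih =>
      intro hk l h1 hl
      rcases eq_or_lt_of_le hl with rfl | hlt
      · exact hk
      · have hkim : k ∈ s.image σ.pos := by
          obtain ⟨j, hj, hjp⟩ := Finset.mem_image.mp hk
          obtain ⟨j', hmj, hpj⟩ := σ.contiguous j (by omega)
          refine Finset.mem_image.mpr ⟨j', ?_, by omega⟩
          simp only [hs, Finset.mem_filter, Finset.mem_univ, true_and] at hj ⊢
          rw [hmj]; exact hj
        exact ih hkim l h1 (by omega)
  have hsub : s.image σ.pos ⊆ Finset.Icc 1 (σ.load i) := by
    intro k hk
    have h1 : 1 ≤ k := by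
      obtain ⟨j, _, hjp⟩ := Finset.mem_image.mp hk
      exact hjp ▸ σ.pos_pos j
    have h2 : Finset.Icc 1 k ⊆ s.image σ.pos := by
      intro l hl
      rw [Finset.mem_Icc] at hl
      exact hdown k hk l hl.1 hl.2
    have h3 := Finset.card_le_card h2
    rw [Nat.card_Icc, hcard] at h3
    rw [Finset.mem_Icc]
    omega
  refine Finset.eq_of_subset_of_card_le hsub ?_
  rw [Nat.card_Icc, hcard]
  omega

lemma pos_le_load (σ : Schedule J m) (j : J) : σ.pos j ≤ σ.load (σ.mach j) := by
  classical
  have : σ.pos j ∈ (Finset.univ.filter fun j' => σ.mach j' = σ.mach j).image σ.pos :=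
    Finset.mem_image.mpr ⟨j, by simp, rfl⟩
  rw [image_pos_eq] at this
  exact (Finset.mem_Icc.mp this).2

lemma exists_pos (σ : Schedule J m) (i : Fin m) (k : ℕ) (h1 : 1 ≤ k)
    (h2 : k ≤ σ.load i) : ∃ j, σ.mach j = i ∧ σ.pos j = k := by
  classical
  have : k ∈ (Finset.univ.filter fun j => σ.mach j = i).image σ.pos := by
    rw [image_pos_eq, Finset.mem_Icc]; exact ⟨h1, h2⟩
  obtain ⟨j, hj, hjp⟩ := Finset.mem_image.mp this
  exact ⟨j, (Finset.mem_filter.mp hj).2, hjp⟩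

lemma one_le_wn (σ : Schedule J m) (j : J) : 1 ≤ σ.wn j := by
  have := σ.pos_le_load j
  unfold wn
  omega

lemma card_ge_pos (σ : Schedule J m) (j' : J) :
    (Finset.univ.filter fun j => σ.mach j' = σ.mach j ∧ σ.pos j' ≤ σ.pos j).card
      = σ.wn j' := by
  classical
  set s := Finset.univ.filter fun j => σ.mach j' = σ.mach j ∧ σ.pos j' ≤ σ.pos j with hs
  have hinj : Set.InjOn σ.pos s := by
    intro a ha b hb hab
    simp only [hs, Finset.coe_filter, Set.mem_setOf_eq, Finset.mem_coe,
      Finset.mem_filter, Finset.mem_univ, true_and] at ha hb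
    exact σ.inj a b (ha.1.symm.trans hb.1) hab
  have himg : s.image σ.pos = Finset.Icc (σ.pos j') (σ.load (σ.mach j')) := by
    ext k
    constructor
    · intro hk
      obtain ⟨j, hj, hjp⟩ := Finset.mem_image.mp hk
      simp only [hs, Finset.mem_filter, Finset.mem_univ, true_and] at hj
      rw [Finset.mem_Icc]
      refine ⟨hjp ▸ hj.2, ?_⟩
      have := σ.pos_le_load j
      rw [← hj.1] at this
      omega
    · intro hk
      rw [Finset.mem_Icc] at hk
      obtain ⟨j, hjm, hjp⟩ := σ.exists_pos (σ.mach j') k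
        (le_trans (σ.pos_pos j') hk.1) hk.2
      refine Finset.mem_image.mpr ⟨j, ?_, hjp⟩
      simp only [hs, Finset.mem_filter, Finset.mem_univ, true_and]
      exact ⟨hjm.symm, by omega⟩
  have := Finset.card_image_of_injOn hinj
  rw [himg, Nat.card_Icc] at this
  have hle := σ.pos_le_load j'
  unfold wn
  omega

lemma totalC_eq (σ : Schedule J m) (p : J → ℝ) :
    σ.totalC p (fun _ => 1) = ∑ j, (σ.wn j : ℝ) * p j := by
  classical
  unfold totalC compl
  simp only [div_one]
  have : ∀ j : J, (∑ j' ∈ Finset.univ.filter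
      (fun j' => σ.mach j' = σ.mach j ∧ σ.pos j' ≤ σ.pos j), p j')
      = ∑ j' : J, if σ.mach j' = σ.mach j ∧ σ.pos j' ≤ σ.pos j then p j' else 0 := by
    intro j; rw [Finset.sum_filter]
  simp only [this]
  rw [Finset.sum_comm]
  refine Finset.sum_congr rfl fun j' _ => ?_
  rw [← Finset.sum_filter, Finset.sum_const, ← card_ge_pos σ j']
  simp [mul_comm]

variable [DecidableEq J]

/-- The schedule obtained from `σ` by exchanging the slots of jobs `a` and `b`. -/
def swapSched (σ : Schedule J m) (a b : J) : Schedule J m where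
  mach := σ.mach ∘ Equiv.swap a b
  pos := σ.pos ∘ Equiv.swap a b
  pos_pos j := σ.pos_pos _
  inj j j' h1 h2 := (Equiv.swap a b).injective (σ.inj _ _ h1 h2)
  contiguous j h2 := by
    obtain ⟨j', hm, hp⟩ := σ.contiguous (Equiv.swap a b j) h2
    exact ⟨Equiv.swap a b j', by simpa [Equiv.swap_apply_self] using hm,
      by simpa [Equiv.swap_apply_self] using hp⟩

lemma load_swap (σ : Schedule J m) (a b : J) (i : Fin m) :
    (σ.swapSched a b).load i = σ.load i := by
  unfold load
  refine Finset.card_bij (fun j _ => Equiv.swap a b j) ?_ ?_ ?_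
  · intro j hj
    simp only [swapSched, Function.comp, Finset.mem_filter, Finset.mem_univ, true_and] at hj ⊢
    exact (Finset.mem_filter.mp hj).2
  · intro j hj j' hj' h
    exact (Equiv.swap a b).injective h
  · intro j hj
    refine ⟨Equiv.swap a b j, ?_, by simp [Equiv.swap_apply_self]⟩
    simp only [swapSched, Function.comp, Finset.mem_filter, Finset.mem_univ, true_and,
      Equiv.swap_apply_self] at hj ⊢
    exact Finset.mem_filter.mpr ⟨Finset.mem_univ _, by simpa [Equiv.swap_apply_self] using hj⟩

lemma wn_swap (σ : Schedule J m) (a b : J) (j : J) :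
    (σ.swapSched a b).wn j = σ.wn (Equiv.swap a b j) := by
  unfold wn
  rw [load_swap]
  rfl

/-- In an optimal schedule, a job with strictly larger processing time has a
positional weight that is at most that of a smaller job. -/
lemma wn_antitone (σ : Schedule J m) (p : J → ℝ)
    (hopt : ∀ τ : Schedule J m, σ.totalC p (fun _ => 1) ≤ τ.totalC p (fun _ => 1))
    {a b : J} (hab : p a < p b) : σ.wn b ≤ σ.wn a := by
  have hne : a ≠ b := fun h => absurd hab (by rw [h]; exact lt_irrefl _)
  have h := hopt (σ.swapSched a b)
  rw [totalC_eq, totalC_eq] at h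
  simp only [wn_swap] at h
  have hre : ∑ j, (σ.wn (Equiv.swap a b j) : ℝ) * p j
      = ∑ j, (σ.wn j : ℝ) * p (Equiv.swap a b j) := by
    have := Equiv.sum_comp (Equiv.swap a b)
      (fun j => (σ.wn j : ℝ) * p (Equiv.swap a b j))
    simpa [Equiv.swap_apply_self] using this
  rw [hre] at h
  have hdiff : ∑ j, (σ.wn j : ℝ) * p (Equiv.swap a b j) - ∑ j, (σ.wn j : ℝ) * p j
      = ((σ.wn a : ℝ) - σ.wn b) * (p b - p a) := by
    rw [← Finset.sum_sub_distrib]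
    have hz : ∀ j ∈ Finset.univ, j ∉ ({a, b} : Finset J) →
        (σ.wn j : ℝ) * p (Equiv.swap a b j) - (σ.wn j : ℝ) * p j = 0 := by
      intro j _ hj
      simp only [Finset.mem_insert, Finset.mem_singleton, not_or] at hj
      rw [Equiv.swap_apply_of_ne_of_ne hj.1 hj.2]
      ring
    rw [← Finset.sum_subset (Finset.subset_univ ({a, b} : Finset J)) hz]
    rw [Finset.sum_pair hne]
    rw [Equiv.swap_apply_left, Equiv.swap_apply_right]
    ring
  have h0 : (0:ℝ) ≤ ((σ.wn a : ℝ) - σ.wn b) * (p b - p a) := by linarith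
  have : (σ.wn b : ℝ) ≤ σ.wn a := by nlinarith
  exact_mod_cast this

lemma card_wn_le (σ : Schedule J m) (t : ℕ) :
    (Finset.univ.filter fun j => σ.wn j ≤ t).card ≤ m * t := by
  classical
  have h : (Finset.univ.filter fun j => σ.wn j ≤ t).card
      ≤ ((Finset.univ : Finset (Fin m)) ×ˢ Finset.Icc 1 t).card := by
    refine Finset.card_le_card_of_injOn (fun j => (σ.mach j, σ.wn j)) ?_ ?_
    · intro j hj
      simp only [Finset.mem_coe, Finset.mem_filter, Finset.mem_univ, true_and] at hj
      simp only [Finset.mem_coe, Finset.mem_product, Finset.mem_univ, true_and, Finset.mem_Icc]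
      exact ⟨σ.one_le_wn j, hj⟩
    · intro j hj j' hj' h
      have h1 : σ.mach j = σ.mach j' := (Prod.mk.injEq _ _ _ _).mp h |>.1
      have h2 : σ.wn j = σ.wn j' := (Prod.mk.injEq _ _ _ _).mp h |>.2
      have := σ.pos_le_load j
      have := σ.pos_le_load j'
      unfold wn at h2
      rw [h1] at h2
      refine σ.inj j j' h1 ?_
      omega
  simpa [Nat.card_Icc] using h

lemma sum_load (σ : Schedule J m) : ∑ i, σ.load i = Fintype.card J := by
  unfold load
  rw [← Finset.card_univ]
  exact (Finset.card_eq_sum_card_fiberwise (fun j _ => Finset.mem_univ (σ.mach j))).symm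

end Aux

end Schedule

/-- Processing times are positive. -/
lemma procNDM_pos (n : ℕ) (x y z : Fin n → ℕ)
    (hx : ∀ i, 0 < x i) (hy : ∀ i, 0 < y i) (hz : ∀ i, 0 < z i)
    (j : Fin 3 × Fin n) : 0 < procNDM n x y z j := by
  unfold procNDM
  split
  · exact_mod_cast hx j.2
  · split
    · have := hy j.2; positivity
    · have := hz j.2; positivity

/-- Strict ordering of processing times between classes. -/
lemma procNDM_mono (n : ℕ) (x y z : Fin n → ℕ)
    (hx : ∀ i, 0 < x i) (hy : ∀ i, 0 < y i) (hz : ∀ i, 0 < z i)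
    (a b : Fin 3 × Fin n) (hab : (a.1 : ℕ) < (b.1 : ℕ)) :
    procNDM n x y z a < procNDM n x y z b := by
  have hxs : x a.2 ≤ ∑ i, x i :=
    Finset.single_le_sum (fun i _ => Nat.zero_le _) (Finset.mem_univ a.2)
  have hys : y a.2 ≤ ∑ i, y i :=
    Finset.single_le_sum (fun i _ => Nat.zero_le _) (Finset.mem_univ a.2)
  have ha3 := a.1.isLt
  have hb3 := b.1.isLt
  unfold procNDM
  have hyb := hy b.2
  have hzb := hz b.2
  rcases Nat.lt_or_ge (a.1 : ℕ) 1 with ha | ha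
  · have ha0 : a.1 = 0 := Fin.ext (by omega)
    rcases Nat.lt_or_ge (b.1 : ℕ) 2 with hb | hb
    · have hb1 : b.1 = 1 := Fin.ext (by omega)
      simp only [ha0, hb1]
      norm_num
      exact_mod_cast (by omega : x a.2 < y b.2 + ∑ i, x i)
    · have hb2 : b.1 = 2 := Fin.ext (by omega)
      simp only [ha0, hb2]
      norm_num
      exact_mod_cast (by omega : x a.2 < z b.2 + ∑ i, y i + ∑ i, x i)
  · have ha1 : a.1 = 1 := Fin.ext (by omega)
    have hb2 : b.1 = 2 := Fin.ext (by omega)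
    simp only [ha1, hb2]
    norm_num
    exact_mod_cast (by omega : y a.2 + ∑ i, x i < z b.2 + ∑ i, y i + ∑ i, x i)

/-- Cardinality of a class of jobs. -/
lemma card_class (n : ℕ) (t : Fin 3) :
    (Finset.univ.filter fun j : Fin 3 × Fin n => j.1 = t).card = n := by
  have : (Finset.univ.filter fun j : Fin 3 × Fin n => j.1 = t)
      = ({t} : Finset (Fin 3)) ×ˢ Finset.univ := by
    ext j
    simp only [Finset.mem_filter, Finset.mem_univ, true_and, Finset.mem_product,
      Finset.mem_singleton, and_true]
  rw [this, Finset.card_product]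
  simp

lemma card_class2 (n : ℕ) :
    (Finset.univ.filter fun j : Fin 3 × Fin n => j.1 = 1 ∨ j.1 = 2).card = 2 * n := by
  have : (Finset.univ.filter fun j : Fin 3 × Fin n => j.1 = 1 ∨ j.1 = 2)
      = ({1, 2} : Finset (Fin 3)) ×ˢ Finset.univ := by
    ext j
    simp only [Finset.mem_filter, Finset.mem_univ, true_and, Finset.mem_product,
      Finset.mem_insert, Finset.mem_singleton, and_true]
  rw [this, Finset.card_product]
  simp


/-- For the Numerical-3-Dimensional-Matching jobs, `p_i < p_{n+j} <
p_{2n+k}` for all `i, j, k`, and in every schedule on `n` identical machines minimizing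
`Σ_j C_j`, each machine processes exactly three jobs: an `X`-job in first position, a
`Y`-job in second position and a `Z`-job in third position (job `(t,i)` is in
position `t+1`). -/
theorem optimal_NDM_schedule_structure
    (n : ℕ) (x y z : Fin n → ℕ)
    (hx : ∀ i, 0 < x i) (hy : ∀ i, 0 < y i) (hz : ∀ i, 0 < z i) :
    (∀ i j k : Fin n,
        procNDM n x y z (0, i) < procNDM n x y z (1, j) ∧
        procNDM n x y z (1, j) < procNDM n x y z (2, k)) ∧
    ∀ σ : Schedule (Fin 3 × Fin n) n,
      (∀ τ : Schedule (Fin 3 × Fin n) n,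
          σ.totalC (procNDM n x y z) (fun _ => 1)
            ≤ τ.totalC (procNDM n x y z) (fun _ => 1)) →
      (∀ i : Fin n, σ.load i = 3) ∧
      ∀ j : Fin 3 × Fin n, σ.pos j = (j.1 : ℕ) + 1 := by
  classical
  set p := procNDM n x y z with hpdef
  have hmono := procNDM_mono n x y z hx hy hz
  have hppos := procNDM_pos n x y z hx hy hz
  constructor
  · intro i j k
    exact ⟨hmono (0, i) (1, j) (by norm_num), hmono (1, j) (2, k) (by norm_num)⟩
  intro σ hopt
  -- the balanced reference schedule
  let τ : Schedule (Fin 3 × Fin n) n :=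
    { mach := fun j => j.2
      pos := fun j => (j.1 : ℕ) + 1
      pos_pos := fun j => Nat.succ_le_succ (Nat.zero_le _)
      inj := fun j j' h1 h2 => by
        have h2' : (j.1 : ℕ) + 1 = (j'.1 : ℕ) + 1 := h2
        have : j.1 = j'.1 := Fin.ext (by omega)
        exact Prod.ext this h1
      contiguous := fun j h2 => by
        have h3 := j.1.isLt
        have h2' : 2 ≤ (j.1 : ℕ) + 1 := h2
        exact ⟨(⟨(j.1 : ℕ) - 1, by omega⟩, j.2), rfl,
          show ((j.1 : ℕ) - 1) + 1 = ((j.1 : ℕ) + 1) - 1 by omega⟩ }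
  have hτm : ∀ j : Fin 3 × Fin n, τ.mach j = j.2 := fun _ => rfl
  have hτp : ∀ j : Fin 3 × Fin n, τ.pos j = (j.1 : ℕ) + 1 := fun _ => rfl
  have hτload : ∀ i : Fin n, τ.load i = 3 := by
    intro i
    have hset : (Finset.univ.filter fun j : Fin 3 × Fin n => τ.mach j = i)
        = (Finset.univ : Finset (Fin 3)) ×ˢ ({i} : Finset (Fin n)) := by
      ext j
      simp only [Finset.mem_filter, Finset.mem_univ, true_and, Finset.mem_product,
        Finset.mem_singleton, hτm]
    unfold Schedule.load
    rw [hset, Finset.card_product]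
    simp
  have hτwn : ∀ j : Fin 3 × Fin n, τ.wn j = 3 - (j.1 : ℕ) := by
    intro j
    unfold Schedule.wn
    rw [hτload, hτp]
    omega
  -- pointwise lower bounds on the positional weights of the optimal schedule
  have hanti : ∀ a b : Fin 3 × Fin n, p a < p b → σ.wn b ≤ σ.wn a :=
    fun a b hab => σ.wn_antitone p hopt hab
  have claimY : ∀ a : Fin 3 × Fin n, a.1 = 1 → 2 ≤ σ.wn a := by
    intro a ha
    by_contra hcon
    push_neg at hcon
    have hsub : insert a (Finset.univ.filter fun b : Fin 3 × Fin n => b.1 = 2)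
        ⊆ Finset.univ.filter fun b => σ.wn b ≤ 1 := by
      intro b hb
      rw [Finset.mem_insert] at hb
      rcases hb with rfl | hb
      · simp only [Finset.mem_filter, Finset.mem_univ, true_and]
        omega
      · simp only [Finset.mem_filter, Finset.mem_univ, true_and] at hb ⊢
        have hpab : p a < p b := hmono a b (by rw [ha, hb]; norm_num)
        have := hanti a b hpab
        omega
    have hnotmem : a ∉ (Finset.univ.filter fun b : Fin 3 × Fin n => b.1 = 2) := by
      simp [ha]
    have hcard := Finset.card_le_card hsub
    rw [Finset.card_insert_of_notMem hnotmem, card_class n 2] at hcard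
    have hbound := σ.card_wn_le 1
    omega
  have claimX : ∀ a : Fin 3 × Fin n, a.1 = 0 → 3 ≤ σ.wn a := by
    intro a ha
    by_contra hcon
    push_neg at hcon
    have hsub : insert a (Finset.univ.filter fun b : Fin 3 × Fin n => b.1 = 1 ∨ b.1 = 2)
        ⊆ Finset.univ.filter fun b => σ.wn b ≤ 2 := by
      intro b hb
      rw [Finset.mem_insert] at hb
      rcases hb with rfl | hb
      · simp only [Finset.mem_filter, Finset.mem_univ, true_and]
        omega
      · simp only [Finset.mem_filter, Finset.mem_univ, true_and] at hb ⊢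
        have hlt : (a.1 : ℕ) < (b.1 : ℕ) := by
          rw [ha]
          rcases hb with hb | hb <;> rw [hb] <;> norm_num
        have := hanti a b (hmono a b hlt)
        omega
    have hnotmem : a ∉ (Finset.univ.filter fun b : Fin 3 × Fin n => b.1 = 1 ∨ b.1 = 2) := by
      simp [ha]
    have hcard := Finset.card_le_card hsub
    rw [Finset.card_insert_of_notMem hnotmem, card_class2 n] at hcard
    have hbound := σ.card_wn_le 2
    omega
  have hwn_ge : ∀ j : Fin 3 × Fin n, 3 - (j.1 : ℕ) ≤ σ.wn j := by
    intro j
    have h3 := j.1.isLt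
    have hcases : (j.1 : ℕ) = 0 ∨ (j.1 : ℕ) = 1 ∨ (j.1 : ℕ) = 2 := by omega
    rcases hcases with h | h | h
    · have := claimX j (Fin.ext (by omega))
      omega
    · have := claimY j (Fin.ext (by omega))
      omega
    · have := σ.one_le_wn j
      omega
  -- equality of total completion times forces the weights
  have hτtot : τ.totalC p (fun _ => 1) = ∑ j, ((3 - (j.1 : ℕ) : ℕ) : ℝ) * p j := by
    rw [Schedule.totalC_eq]
    refine Finset.sum_congr rfl fun j _ => ?_
    rw [hτwn]
  have hle := hopt τ
  rw [Schedule.totalC_eq, hτtot] at hle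
  have hptwise : ∀ j ∈ (Finset.univ : Finset (Fin 3 × Fin n)),
      ((3 - (j.1 : ℕ) : ℕ) : ℝ) * p j ≤ (σ.wn j : ℝ) * p j := by
    intro j _
    have h1 : ((3 - (j.1 : ℕ) : ℕ) : ℝ) ≤ (σ.wn j : ℝ) := by exact_mod_cast hwn_ge j
    have h2 := hppos j
    nlinarith
  have hsum_ge : ∑ j, ((3 - (j.1 : ℕ) : ℕ) : ℝ) * p j ≤ ∑ j, (σ.wn j : ℝ) * p j :=
    Finset.sum_le_sum hptwise
  have hzero : ∑ j, ((σ.wn j : ℝ) - ((3 - (j.1 : ℕ) : ℕ) : ℝ)) * p j = 0 := by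
    have : ∑ j, ((σ.wn j : ℝ) - ((3 - (j.1 : ℕ) : ℕ) : ℝ)) * p j
        = ∑ j, (σ.wn j : ℝ) * p j - ∑ j, ((3 - (j.1 : ℕ) : ℕ) : ℝ) * p j := by
      rw [← Finset.sum_sub_distrib]
      refine Finset.sum_congr rfl fun j _ => by ring
    rw [this]
    linarith
  have hwn_eq : ∀ j : Fin 3 × Fin n, σ.wn j = 3 - (j.1 : ℕ) := by
    intro j
    have hnn : ∀ j' ∈ (Finset.univ : Finset (Fin 3 × Fin n)),
        0 ≤ ((σ.wn j' : ℝ) - ((3 - (j'.1 : ℕ) : ℕ) : ℝ)) * p j' := by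
      intro j' _
      have h1 : ((3 - (j'.1 : ℕ) : ℕ) : ℝ) ≤ (σ.wn j' : ℝ) := by exact_mod_cast hwn_ge j'
      have h2 := hppos j'
      nlinarith
    have := (Finset.sum_eq_zero_iff_of_nonneg hnn).mp hzero j (Finset.mem_univ j)
    have h2 := hppos j
    have h3 : (σ.wn j : ℝ) = ((3 - (j.1 : ℕ) : ℕ) : ℝ) := by
      rcases mul_eq_zero.mp this with h | h
      · linarith
      · exact absurd h (ne_of_gt h2)
    exact_mod_cast h3
  -- derive the loads
  have hload_le : ∀ i : Fin n, σ.load i ≤ 3 := by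
    intro i
    by_cases h0 : σ.load i = 0
    · omega
    · obtain ⟨j, hjm, hjp⟩ := σ.exists_pos i 1 le_rfl (by omega)
      have h1 := hwn_eq j
      unfold Schedule.wn at h1
      rw [hjm, hjp] at h1
      have h4 := j.1.isLt
      omega
  have hsum := σ.sum_load
  rw [Fintype.card_prod, Fintype.card_fin, Fintype.card_fin] at hsum
  have hload : ∀ i : Fin n, σ.load i = 3 := by
    intro i
    by_contra hne
    have hlt : σ.load i < 3 := lt_of_le_of_ne (hload_le i) hne
    have hstrict : ∑ i', σ.load i' < ∑ _i' : Fin n, 3 :=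
      Finset.sum_lt_sum (fun i' _ => hload_le i') ⟨i, Finset.mem_univ i, hlt⟩
    rw [Finset.sum_const, Finset.card_univ, Fintype.card_fin, smul_eq_mul] at hstrict
    omega
  refine ⟨hload, fun j => ?_⟩
  have h1 := hwn_eq j
  unfold Schedule.wn at h1
  rw [hload (σ.mach j)] at h1
  have h2 := σ.pos_pos j
  have h3 := σ.pos_le_load j
  rw [hload (σ.mach j)] at h3
  have h4 := j.1.isLt
  omega
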